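/- Fix an integer N ≥ 2 and constants L > 0, M > 1. There exists a constant C > 0, depending only on N, L and M, such that for every L-Lipschitz function f : Q' → [1, M] and every function u : ℝ^N → ℝ that is continuously differentiable on an open neighborhood of the closure of Q_f and satisfies ∫_{Q_f} u dx = 0, one has ∫_{Q_f} u² dx ≤ C² ∫_{Q_f} |∇u|² dx. -/

import Mathlib

open Set MeasureTheory

noncomputable section

/-- Projection onto the first `d` coordinates. -/
def proj {d : ℕ} (x : EuclideanSpace ℝ (Fin (d + 1))) : EuclideanSpace ℝ (Fin d) :=
  WithLp.toLp 2 (fun (i : Fin d) => x i.castSucc)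

/-- Embedding of the base `Q' × {0}`. -/
def embed {d : ℕ} (y : EuclideanSpace ℝ (Fin d)) : EuclideanSpace ℝ (Fin (d + 1)) :=
  WithLp.toLp 2 (fun (i : Fin (d + 1)) => if h : (i : ℕ) < d then y ⟨i, h⟩ else 0)

/-- The open unit cube `Q' = (0,1)^d`. -/
def cube (d : ℕ) : Set (EuclideanSpace ℝ (Fin d)) :=
  {y | ∀ i, y i ∈ Ioo (0 : ℝ) 1}

/-- The open subgraph domain `Q_f`. -/
def Qf {d : ℕ} (f : EuclideanSpace ℝ (Fin d) → ℝ) : Set (EuclideanSpace ℝ (Fin (d + 1))) :=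
  {x | proj x ∈ cube d ∧ x (Fin.last d) ∈ Ioo 0 (f (proj x))}

-- abbreviations
abbrev Eu (n : ℕ) := EuclideanSpace ℝ (Fin n)

namespace PoincareAux

variable {d : ℕ}

/-- append a last coordinate -/
def iota {d : ℕ} (y : Eu d) (t : ℝ) : Eu (d+1) :=
  WithLp.toLp 2 (Fin.snoc (α := fun _ => ℝ) y.ofLp t)

@[simp] lemma proj_iota (y : Eu d) (t : ℝ) : proj (iota y t) = y := by
  ext i; simp [proj, iota, Fin.snoc_castSucc]

@[simp] lemma iota_last (y : Eu d) (t : ℝ) : iota y t (Fin.last d) = t := by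
  simp [iota]

@[simp] lemma iota_castSucc (y : Eu d) (t : ℝ) (i : Fin d) :
    iota y t i.castSucc = y i := by simp [iota]

lemma iota_proj (x : Eu (d+1)) : iota (proj x) (x (Fin.last d)) = x := by
  ext i
  induction i using Fin.lastCases with
  | last => simp [iota]
  | cast i => simp [iota, proj]

lemma continuous_iota : Continuous (fun p : (Eu d) × ℝ => iota p.1 p.2) := by
  unfold iota
  apply (PiLp.continuous_toLp 2 (fun _ : Fin (d+1) => ℝ)).comp
  apply continuous_pi
  intro i
  induction i using Fin.lastCases with
  | last => simpa [iota] using continuous_snd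
  | cast i =>
      simpa [iota, Function.comp_def] using (PiLp.continuous_apply 2 (fun _ : Fin d => ℝ) i).comp continuous_fst

/-- the measurable equiv splitting off the last coordinate -/
def phi (d : ℕ) : (Eu (d+1)) ≃ᵐ (Eu d) × ℝ :=
  (MeasurableEquiv.toLp 2 (Fin (d+1) → ℝ)).symm.trans <|
    ((MeasurableEquiv.piFinSuccAbove (fun _ => ℝ) (Fin.last d)).trans <|
      (MeasurableEquiv.prodComm : ℝ × (Fin d → ℝ) ≃ᵐ (Fin d → ℝ) × ℝ).trans <|
        MeasurableEquiv.prodCongr (MeasurableEquiv.toLp 2 (Fin d → ℝ)).symm.symm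
          (MeasurableEquiv.refl ℝ))

lemma phi_apply (x : Eu (d+1)) : phi d x = (proj x, x (Fin.last d)) := by
  show ((MeasurableEquiv.prodCongr (MeasurableEquiv.toLp 2 (Fin d → ℝ)).symm.symm
      (MeasurableEquiv.refl ℝ)) ((MeasurableEquiv.prodComm) ((MeasurableEquiv.piFinSuccAbove (fun _ => ℝ) (Fin.last d)) ((MeasurableEquiv.toLp 2 (Fin (d+1) → ℝ)).symm x)))) = _
  ext
  · simp [MeasurableEquiv.prodCongr, MeasurableEquiv.prodComm,
      MeasurableEquiv.piFinSuccAbove, MeasurableEquiv.coe_toLp_symm, MeasurableEquiv.coe_toLp, proj,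
      Fin.succAbove_last]
    try rfl
  · simp [MeasurableEquiv.prodCongr, MeasurableEquiv.prodComm,
      MeasurableEquiv.piFinSuccAbove, MeasurableEquiv.coe_toLp_symm, MeasurableEquiv.coe_toLp]
    try rfl

lemma phi_symm_apply (y : Eu d) (t : ℝ) : (phi d).symm (y, t) = iota y t := by
  have := phi_apply (d := d) (iota y t)
  simp at this
  have h2 : (phi d).symm (phi d (iota y t)) = iota y t := (phi d).symm_apply_apply _
  rwa [this] at h2

lemma measurePreserving_phi : MeasurePreserving (phi d) volume volume := by
  have h1 := EuclideanSpace.volume_preserving_symm_measurableEquiv_toLp (Fin (d+1))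
  have h2 := volume_preserving_piFinSuccAbove (fun _ : Fin (d+1) => ℝ) (Fin.last d)
  have h3 : MeasurePreserving (MeasurableEquiv.prodComm : ℝ × (Fin d → ℝ) ≃ᵐ (Fin d → ℝ) × ℝ)
      volume volume := by
    have := (MeasureTheory.Measure.measurePreserving_swap (μ := (volume : Measure ℝ))
      (ν := (volume : Measure (Fin d → ℝ))))
    simp only [Measure.volume_eq_prod]; exact this
  have h4 : MeasurePreserving
      (MeasurableEquiv.prodCongr (MeasurableEquiv.toLp 2 (Fin d → ℝ)).symm.symm
        (MeasurableEquiv.refl ℝ) : (Fin d → ℝ) × ℝ ≃ᵐ (Eu d) × ℝ) volume volume := by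
    have := ((EuclideanSpace.volume_preserving_symm_measurableEquiv_toLp (Fin d)).symm).prod
      (MeasurePreserving.id (volume : Measure ℝ))
    simpa [Measure.volume_eq_prod, MeasurableEquiv.prodCongr] using this
  exact ((h4.comp h3).comp h2).comp h1



/-! ### basic topology and measure facts -/

lemma isOpen_cube (d : ℕ) : IsOpen (cube d) := by
  have : cube d = ⋂ i : Fin d, (fun y : Eu d => y i) ⁻¹' Ioo (0:ℝ) 1 := by
    ext y; simp [cube, mem_iInter]
  rw [this]
  exact isOpen_iInter_of_finite fun i =>
    (isOpen_Ioo).preimage (PiLp.continuous_apply 2 (fun _ : Fin d => ℝ) i)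

lemma measurableSet_cube (d : ℕ) : MeasurableSet (cube d) := (isOpen_cube d).measurableSet

lemma volume_cube (d : ℕ) : volume (cube d) = 1 := by
  have hpre : cube d = (MeasurableEquiv.toLp 2 (Fin d → ℝ)).symm ⁻¹'
      (Set.pi univ fun _ : Fin d => Ioo (0:ℝ) 1) := by
    ext y; simp [cube, MeasurableEquiv.coe_toLp_symm, MeasurableEquiv.coe_toLp, Set.mem_pi]
  rw [hpre, (EuclideanSpace.volume_preserving_symm_measurableEquiv_toLp (Fin d)).measure_preimage
    (MeasurableSet.univ_pi fun _ => measurableSet_Ioo).nullMeasurableSet]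
  simp [volume_pi_pi]

lemma cube_succ_eq (d : ℕ) : cube (d+1) = Qf (fun _ : Eu d => (1:ℝ)) := by
  ext x
  constructor
  · intro hx
    exact ⟨fun i => hx i.castSucc, hx (Fin.last d)⟩
  · rintro ⟨h1, h2⟩ i
    induction i using Fin.lastCases with
    | last => exact h2
    | cast i => exact h1 i

lemma mem_Qf_iota {f : Eu d → ℝ} {y : Eu d} {t : ℝ} (hy : y ∈ cube d)
    (ht : t ∈ Ioo 0 (f y)) : iota y t ∈ Qf f := by
  refine ⟨by simpa using hy, by simpa using ht⟩

lemma continuous_proj : Continuous (fun x : Eu (d+1) => proj x) := by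
  unfold proj
  apply (PiLp.continuous_toLp 2 (fun _ : Fin d => ℝ)).comp
  apply continuous_pi; intro i
  exact PiLp.continuous_apply 2 (fun _ : Fin (d+1) => ℝ) i.castSucc

lemma isOpen_Qf {f : Eu d → ℝ} (hf : Continuous f) : IsOpen (Qf f) := by
  have hproj : Continuous (fun x : Eu (d+1) => proj x) := continuous_proj
  have hlast : Continuous (fun x : Eu (d+1) => x (Fin.last d)) :=
    PiLp.continuous_apply 2 (fun _ : Fin (d+1) => ℝ) (Fin.last d)
  have : Qf f = (proj ⁻¹' cube d) ∩ ({x | 0 < x (Fin.last d)} ∩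
      {x | x (Fin.last d) < f (proj x)}) := by
    ext x; simp [Qf, and_assoc]
  rw [this]
  refine (((isOpen_cube d).preimage hproj).inter (IsOpen.inter ?_ ?_))
  · exact isOpen_lt continuous_const hlast
  · exact isOpen_lt hlast (hf.comp hproj)

lemma norm_le_of_mem_Qf {f : Eu d → ℝ} {M : ℝ} (hM : 1 ≤ M)
    (hfM : ∀ y, f y ≤ M) {x : Eu (d+1)} (hx : x ∈ Qf f) :
    ‖x‖ ≤ Real.sqrt ((d+1) * M^2) := by
  rw [EuclideanSpace.norm_eq]
  apply Real.sqrt_le_sqrt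
  have hbd : ∀ i : Fin (d+1), ‖x i‖ ^ 2 ≤ M ^ 2 := by
    intro i
    have hM0 : (0:ℝ) ≤ M := le_trans zero_le_one hM
    have : |x i| ≤ M := by
      induction i using Fin.lastCases with
      | last =>
          have h2 := hx.2
          rw [abs_le]
          constructor
          · linarith [h2.1, hfM (proj x)]
          · linarith [h2.2, hfM (proj x)]
      | cast i =>
          have h1 : (0:ℝ) < x i.castSucc ∧ x i.castSucc < 1 := hx.1 i
          rw [abs_le]
          constructor <;> [linarith [h1.1]; linarith [h1.2, hM]]
    calc ‖x i‖ ^ 2 = |x i| ^ 2 := by rw [Real.norm_eq_abs]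
      _ ≤ M ^ 2 := by nlinarith [abs_nonneg (x i)]
  calc ∑ i, ‖x i‖ ^ 2 ≤ ∑ _i : Fin (d+1), M ^ 2 := Finset.sum_le_sum fun i _ => hbd i
    _ = (d+1) * M^2 := by
      simp [Finset.sum_const, nsmul_eq_mul]
      try push_cast
      try ring

lemma isCompact_closure_Qf {f : Eu d → ℝ} {M : ℝ} (hM : 1 ≤ M) (hfM : ∀ y, f y ≤ M) :
    IsCompact (closure (Qf f)) := by
  apply Metric.isCompact_of_isClosed_isBounded isClosed_closure
  rw [Metric.isBounded_iff_subset_closedBall 0]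
  refine ⟨Real.sqrt ((d+1) * M^2), ?_⟩
  apply closure_minimal ?_ Metric.isClosed_closedBall
  intro x hx
  simpa [Metric.mem_closedBall, dist_eq_norm] using norm_le_of_mem_Qf hM hfM hx

lemma volume_Qf_lt_top {f : Eu d → ℝ} {M : ℝ} (hM : 1 ≤ M) (hfM : ∀ y, f y ≤ M) :
    volume (Qf f) < ⊤ :=
  lt_of_le_of_lt (measure_mono subset_closure) (isCompact_closure_Qf hM hfM).measure_lt_top

lemma integrableOn_Qf_of_continuousOn {f : Eu d → ℝ} {M : ℝ} (hM : 1 ≤ M)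
    (hfM : ∀ y, f y ≤ M) {h : Eu (d+1) → ℝ} (hh : ContinuousOn h (closure (Qf f))) :
    IntegrableOn h (Qf f) :=
  (hh.integrableOn_compact (isCompact_closure_Qf hM hfM)).mono_set subset_closure

lemma dist_iota (y y' : Eu d) (t : ℝ) : dist (iota y t) (iota y' t) = dist y y' := by
  rw [EuclideanSpace.dist_eq, EuclideanSpace.dist_eq]
  congr 1
  rw [Fin.sum_univ_castSucc]
  simp

lemma iota_mem_closure_cube_succ {y : Eu d} {t : ℝ} (hy : y ∈ closure (cube d))
    (ht : t ∈ Icc (0:ℝ) 1) : iota y t ∈ closure (cube (d+1)) := by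
  have h1 : (y, t) ∈ closure ((cube d) ×ˢ Ioo (0:ℝ) 1) := by
    rw [closure_prod_eq]
    exact ⟨hy, by rwa [closure_Ioo one_ne_zero.symm]⟩
  have h2 := image_closure_subset_closure_image (f := fun p : (Eu d) × ℝ => iota p.1 p.2)
    continuous_iota (s := (cube d) ×ˢ Ioo (0:ℝ) 1)
  have h3 : iota y t ∈ closure ((fun p : (Eu d) × ℝ => iota p.1 p.2) '' ((cube d) ×ˢ Ioo (0:ℝ) 1)) :=
    h2 ⟨(y, t), h1, rfl⟩
  refine closure_mono ?_ h3
  rintro _ ⟨⟨y', t'⟩, ⟨hy', ht'⟩, rfl⟩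
  rw [cube_succ_eq]
  exact mem_Qf_iota hy' ht'

lemma iota_mem_closure_Qf {f : Eu d → ℝ} {y : Eu d} {t : ℝ} (hy : y ∈ cube d)
    (hfy : 0 < f y) (ht : t ∈ Icc 0 (f y)) : iota y t ∈ closure (Qf f) := by
  have h1 : t ∈ closure (Ioo 0 (f y)) := by rwa [closure_Ioo (ne_of_lt hfy)]
  have h2 := image_closure_subset_closure_image (f := fun s : ℝ => iota y s)
    (continuous_iota.comp (Continuous.prodMk_right y)) (s := Ioo 0 (f y))
  have h3 : iota y t ∈ closure ((fun s : ℝ => iota y s) '' Ioo 0 (f y)) := h2 ⟨t, h1, rfl⟩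
  refine closure_mono ?_ h3
  rintro _ ⟨s, hs, rfl⟩
  exact mem_Qf_iota hy hs

lemma proj_mem_closure_cube {f : Eu d → ℝ} {x : Eu (d+1)} (hx : x ∈ closure (Qf f)) :
    proj x ∈ closure (cube d) := by
  have hproj : Continuous (fun x : Eu (d+1) => proj x) := continuous_proj
  have := image_closure_subset_closure_image hproj (s := Qf f) ⟨x, hx, rfl⟩
  refine closure_mono ?_ this
  rintro _ ⟨z, hz, rfl⟩
  exact hz.1

lemma cube_subset_Qf {f : Eu d → ℝ} (hf1 : ∀ y, 1 ≤ f y) : cube (d+1) ⊆ Qf f := by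
  intro x hx
  rw [cube_succ_eq] at hx
  exact ⟨hx.1, hx.2.1, lt_of_lt_of_le hx.2.2 (hf1 _)⟩

/-! ### Cauchy-Schwarz for set integrals -/

lemma sq_setIntegral_le {α : Type*} [MeasurableSpace α] {μ : Measure α} {s : Set α}
    (hs : MeasurableSet s) (hμ : μ s ≠ ⊤) {h : α → ℝ}
    (hi : IntegrableOn h s μ) (hi2 : IntegrableOn (fun x => h x ^ 2) s μ) :
    (∫ x in s, h x ∂μ)^2 ≤ (μ s).toReal * ∫ x in s, h x ^ 2 ∂μ := by
  set ν := μ.restrict s with hν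
  haveI : IsFiniteMeasure ν := by
    constructor
    rw [hν, Measure.restrict_apply_univ]
    exact lt_top_iff_ne_top.2 hμ
  have habs : Integrable (fun x => |h x|) ν := hi.abs
  have hsq_abs : Integrable (fun x => |h x| ^ 2) ν := by
    have : (fun x => |h x| ^ 2) = fun x => h x ^ 2 := by funext x; rw [sq_abs]
    rw [this]; exact hi2
  have hmem : MemLp (fun x => |h x|) 2 ν :=
    (memLp_two_iff_integrable_sq habs.aestronglyMeasurable).2 hsq_abs
  have hconj : Real.HolderConjugate 2 2 := Real.HolderConjugate.two_two
  have h1 : MemLp (fun _ : α => (1:ℝ)) (ENNReal.ofReal (2:ℝ)) ν := by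
    have : ENNReal.ofReal (2:ℝ) = 2 := by norm_num
    rw [this]; exact memLp_const 1
  have h2 : MemLp (fun x => |h x|) (ENNReal.ofReal (2:ℝ)) ν := by
    have : ENNReal.ofReal (2:ℝ) = 2 := by norm_num
    rw [this]; exact hmem
  have key := integral_mul_le_Lp_mul_Lq_of_nonneg (μ := ν) hconj
    (f := fun _ => (1:ℝ)) (g := fun x => |h x|)
    (Filter.Eventually.of_forall fun _ => zero_le_one)
    (Filter.Eventually.of_forall fun x => abs_nonneg _) h1 h2
  simp only [one_mul] at key
  have e1 : ∫ a, (1:ℝ) ^ (2:ℝ) ∂ν = (μ s).toReal := by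
    simp [hν, Measure.restrict_apply_univ, measureReal_def]
  have e2 : ∫ a, |h a| ^ (2:ℝ) ∂ν = ∫ a, h a ^ 2 ∂ν := by
    congr 1; funext a
    have h2n : |h a| ^ (2:ℝ) = |h a| ^ (2:ℕ) := by
      rw [← Real.rpow_natCast |h a| 2]; norm_num
    rw [h2n, sq_abs]
  rw [e1, e2] at key
  have hIabs : (∫ x in s, h x ∂μ)^2 ≤ (∫ a, |h a| ∂ν)^2 := by
    have h1' : |∫ x in s, h x ∂μ| ≤ ∫ a, |h a| ∂ν := by
      simpa [Real.norm_eq_abs] using norm_integral_le_integral_norm (μ := ν) h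
    calc (∫ x in s, h x ∂μ)^2 = |∫ x in s, h x ∂μ|^2 := (sq_abs _).symm
      _ ≤ (∫ a, |h a| ∂ν)^2 := by
          apply pow_le_pow_left₀ (abs_nonneg _) h1' 2
  have hnn : (0:ℝ) ≤ ∫ a, h a ^ 2 ∂ν := integral_nonneg fun a => sq_nonneg _
  have hnnμ : (0:ℝ) ≤ (μ s).toReal := ENNReal.toReal_nonneg
  calc (∫ x in s, h x ∂μ)^2 ≤ (∫ a, |h a| ∂ν)^2 := hIabs
    _ ≤ ((μ s).toReal ^ (1/(2:ℝ)) * (∫ a, h a ^ 2 ∂ν) ^ (1/(2:ℝ)))^2 := by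
        apply pow_le_pow_left₀ (integral_nonneg fun a => abs_nonneg _) key 2
    _ = (μ s).toReal * ∫ a, h a ^ 2 ∂ν := by
        rw [mul_pow, ← Real.rpow_natCast ((μ s).toReal ^ (1/(2:ℝ))) 2,
          ← Real.rpow_natCast ((∫ a, h a ^ 2 ∂ν) ^ (1/(2:ℝ))) 2,
          ← Real.rpow_mul hnnμ, ← Real.rpow_mul hnn]
        norm_num

/-! ### 1-d Poincaré-type estimate on a fiber -/

lemma core1d {a : ℝ} (ha : 1 ≤ a) {g g' : ℝ → ℝ} {O : Set ℝ} (hO : IsOpen O)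
    (hIcc : Icc 0 a ⊆ O) (hg : ∀ t ∈ O, HasDerivAt g (g' t) t)
    (hg' : ContinuousOn g' O) :
    ∫ t in Ioo 0 a, (g t - ∫ s in Ioo 0 1, g s)^2 ≤
      a^2 * ∫ t in Ioo 0 a, (g' t)^2 := by
  have ha0 : (0:ℝ) < a := lt_of_lt_of_le one_pos ha
  have hIcc1 : Icc (0:ℝ) 1 ⊆ Icc 0 a := Icc_subset_Icc le_rfl ha
  have hIoo1 : Ioo (0:ℝ) 1 ⊆ Ioo 0 a := Ioo_subset_Ioo le_rfl ha
  have hgc : ContinuousOn g O := fun t ht => (hg t ht).continuousAt.continuousWithinAt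
  -- integrability of g'^2 on Ioo 0 a
  have hg'sq_int : IntegrableOn (fun t => g' t ^ 2) (Ioo 0 a) := by
    have : IntegrableOn (fun t => g' t ^ 2) (Icc 0 a) :=
      (((hg'.mono hIcc)).pow 2).integrableOn_compact isCompact_Icc
    exact this.mono_set Ioo_subset_Icc_self
  set I := ∫ t in Ioo 0 a, (g' t)^2 with hI
  have hInn : 0 ≤ I := setIntegral_nonneg measurableSet_Ioo fun t _ => sq_nonneg _
  have hg_int_Icc : IntegrableOn g (Icc 0 a) :=
    (hgc.mono hIcc).integrableOn_compact isCompact_Icc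
  have hg'_int_Icc : IntegrableOn g' (Icc 0 a) :=
    (hg'.mono hIcc).integrableOn_compact isCompact_Icc
  -- two-point estimate
  have tp : ∀ t ∈ Ioo 0 a, ∀ s ∈ Ioo 0 a, (g t - g s)^2 ≤ a * I := by
    intro t ht s hs
    have huIcc : uIcc s t ⊆ Icc 0 a := by
      rw [Set.uIcc]
      exact Icc_subset_Icc (le_inf (le_of_lt hs.1) (le_of_lt ht.1))
        (sup_le (le_of_lt hs.2) (le_of_lt ht.2))
    have hint : IntervalIntegrable g' volume s t :=
      (hg'.mono (huIcc.trans hIcc)).intervalIntegrable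
    have hftc : g t - g s = ∫ r in s..t, g' r :=
      (intervalIntegral.integral_eq_sub_of_hasDerivAt
        (fun r hr => hg r (hIcc (huIcc hr))) hint).symm
    have hsq : (g t - g s)^2 = (∫ r in Set.uIoc s t, g' r)^2 := by
      rw [hftc, intervalIntegral.intervalIntegral_eq_integral_uIoc]
      split_ifs <;> simp [neg_sq]
    have hΙsub : Set.uIoc s t ⊆ Ioo 0 a := by
      rw [Set.uIoc]
      intro r hr
      exact ⟨lt_trans (lt_inf_iff.2 ⟨hs.1, ht.1⟩) hr.1,
        lt_of_le_of_lt hr.2 (sup_lt_iff.2 ⟨hs.2, ht.2⟩)⟩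
    have hΙIcc : Set.uIoc s t ⊆ Icc 0 a := hΙsub.trans Ioo_subset_Icc_self
    have hμΙ : volume (Set.uIoc s t) ≠ ⊤ := by
      refine ne_of_lt (lt_of_le_of_lt (measure_mono hΙIcc) ?_)
      simp [Real.volume_Icc]
    have hcs := sq_setIntegral_le measurableSet_uIoc hμΙ
      (hg'_int_Icc.mono_set hΙIcc) (hg'sq_int.mono_set hΙsub)
    have hvol : (volume (Set.uIoc s t)).toReal ≤ a := by
      rw [Set.uIoc, Real.volume_Ioc, ENNReal.toReal_ofReal] <;>
        [skip; simp [le_of_lt (lt_inf_iff.2 ⟨hs.1, ht.1⟩), le_of_lt (sup_lt_iff.2 ⟨hs.2, ht.2⟩)]]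
      · have h1 : s ⊔ t < a := sup_lt_iff.2 ⟨hs.2, ht.2⟩
        have h2 : (0:ℝ) < s ⊓ t := lt_inf_iff.2 ⟨hs.1, ht.1⟩
        linarith
    have hset : ∫ r in Set.uIoc s t, (g' r)^2 ≤ I := by
      rw [hI]
      exact setIntegral_mono_set hg'sq_int
        (Filter.Eventually.of_forall fun r => sq_nonneg _) hΙsub.eventuallyLE
    have hnn2 : 0 ≤ ∫ r in Set.uIoc s t, (g' r)^2 :=
      setIntegral_nonneg measurableSet_uIoc fun r _ => sq_nonneg _
    calc (g t - g s)^2 = (∫ r in Set.uIoc s t, g' r)^2 := hsq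
      _ ≤ (volume (Set.uIoc s t)).toReal * ∫ r in Set.uIoc s t, (g' r)^2 := hcs
      _ ≤ a * I := mul_le_mul hvol hset hnn2 (le_of_lt ha0)
  -- estimate against the mean over (0,1)
  set m := ∫ s in Ioo (0:ℝ) 1, g s with hm
  have hg_int_01 : IntegrableOn g (Ioo 0 1) :=
    (hg_int_Icc.mono_set hIcc1).mono_set Ioo_subset_Icc_self
  have mid : ∀ t ∈ Ioo 0 a, (g t - m)^2 ≤ a * I := by
    intro t ht
    have hconst : IntegrableOn (fun _ : ℝ => g t) (Ioo 0 1) :=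
      integrableOn_const (by simp [Real.volume_Ioo])
    have hdiff : g t - m = ∫ s in Ioo (0:ℝ) 1, (g t - g s) := by
      rw [integral_sub hconst hg_int_01, setIntegral_const]
      simp [Real.volume_Ioo, hm]
    have hdint : IntegrableOn (fun s => (g t - g s)^2) (Ioo 0 1) := by
      have : IntegrableOn (fun s => (g t - g s)^2) (Icc 0 1) :=
        ((continuousOn_const.sub (hgc.mono (hIcc1.trans hIcc))).pow 2).integrableOn_compact
          isCompact_Icc
      exact this.mono_set Ioo_subset_Icc_self
    have hdint1 : IntegrableOn (fun s => g t - g s) (Ioo 0 1) :=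
      hconst.sub hg_int_01
    have hμ01 : volume (Ioo (0:ℝ) 1) ≠ ⊤ := by simp [Real.volume_Ioo]
    have hcs := sq_setIntegral_le measurableSet_Ioo hμ01 hdint1 hdint
    have hvol1 : (volume (Ioo (0:ℝ) 1)).toReal = 1 := by simp [Real.volume_Ioo]
    have hbd : ∫ s in Ioo (0:ℝ) 1, (g t - g s)^2 ≤ a * I := by
      have hmono := setIntegral_mono_on hdint
        (integrableOn_const (by simp [Real.volume_Ioo]))
        measurableSet_Ioo (fun s hs => tp t ht s (hIoo1 hs))
      calc ∫ s in Ioo (0:ℝ) 1, (g t - g s)^2 ≤ ∫ _s in Ioo (0:ℝ) 1, a * I := hmono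
        _ = a * I := by rw [setIntegral_const, measureReal_def, hvol1, one_smul]
    calc (g t - m)^2 = (∫ s in Ioo (0:ℝ) 1, (g t - g s))^2 := by rw [hdiff]
      _ ≤ (volume (Ioo (0:ℝ) 1)).toReal * ∫ s in Ioo (0:ℝ) 1, (g t - g s)^2 := hcs
      _ = ∫ s in Ioo (0:ℝ) 1, (g t - g s)^2 := by rw [hvol1, one_mul]
      _ ≤ a * I := hbd
  -- integrate
  have hLHSint : IntegrableOn (fun t => (g t - m)^2) (Ioo 0 a) := by
    have : IntegrableOn (fun t => (g t - m)^2) (Icc 0 a) :=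
      (((hgc.mono hIcc).sub continuousOn_const).pow 2).integrableOn_compact isCompact_Icc
    exact this.mono_set Ioo_subset_Icc_self
  have hμa : volume (Ioo (0:ℝ) a) ≠ ⊤ := by simp [Real.volume_Ioo]
  have final := setIntegral_mono_on hLHSint
    (integrableOn_const (by simp [Real.volume_Ioo])) measurableSet_Ioo mid
  calc ∫ t in Ioo 0 a, (g t - m)^2 ≤ ∫ _t in Ioo 0 a, a * I := final
    _ = a * (a * I) := by
        rw [setIntegral_const, measureReal_def, Real.volume_Ioo, ENNReal.toReal_ofReal (by linarith), smul_eq_mul]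
        ring_nf
    _ = a^2 * I := by ring

/-! ### Fubini for subgraph domains -/

def Tset (f : Eu d → ℝ) : Set ((Eu d) × ℝ) := {p | p.1 ∈ cube d ∧ p.2 ∈ Ioo 0 (f p.1)}

lemma isOpen_Tset {f : Eu d → ℝ} (hfc : Continuous f) : IsOpen (Tset f) := by
  have h1 : Tset f = (Prod.fst ⁻¹' cube d) ∩ ({p : (Eu d) × ℝ | 0 < p.2} ∩
      {p : (Eu d) × ℝ | p.2 < f p.1}) := by
    ext p; simp [Tset, and_assoc]
  rw [h1]
  exact ((isOpen_cube d).preimage continuous_fst).inter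
    ((isOpen_lt continuous_const continuous_snd).inter
      (isOpen_lt continuous_snd (hfc.comp continuous_fst)))

lemma Qf_eq_preimage (f : Eu d → ℝ) : Qf f = phi d ⁻¹' (Tset f) := by
  ext x
  simp only [Set.mem_preimage, phi_apply, Tset, Set.mem_setOf_eq, Qf]

lemma integrableOn_Tset {f : Eu d → ℝ} {h : Eu (d+1) → ℝ}
    (hi : IntegrableOn h (Qf f)) (hT : MeasurableSet (Tset f)) :
    IntegrableOn (fun p => h ((phi d).symm p)) (Tset f) := by
  have hmp : MeasurePreserving (phi d) (volume.restrict (phi d ⁻¹' (Tset f)))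
      (volume.restrict (Tset f)) :=
    (measurePreserving_phi (d := d)).restrict_preimage hT
  have hiff := (hmp.integrable_comp_emb (phi d).measurableEmbedding
    (g := fun p => h ((phi d).symm p)))
  refine hiff.1 ?_
  have he : (fun p => h ((phi d).symm p)) ∘ (phi d) = h := by
    funext x; simp
  rw [he]
  rw [Qf_eq_preimage] at hi
  exact hi

lemma inner_indicator_eq {f : Eu d → ℝ} (h : Eu (d+1) → ℝ) (y : Eu d) :
    ∫ t : ℝ, ((Tset f).indicator (fun p => h ((phi d).symm p))) (y, t) =
      (cube d).indicator (fun y => ∫ t in Ioo 0 (f y), h (iota y t)) y := by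
  by_cases hy : y ∈ cube d
  · have e1 : (fun t : ℝ => ((Tset f).indicator (fun p => h ((phi d).symm p))) (y, t)) =
        (Ioo 0 (f y)).indicator (fun t => h (iota y t)) := by
      funext t
      by_cases ht : t ∈ Ioo 0 (f y)
      · have hmem : (y, t) ∈ Tset f := ⟨hy, ht⟩
        rw [Set.indicator_of_mem hmem, Set.indicator_of_mem ht, phi_symm_apply]
      · rw [Set.indicator_of_notMem (fun hc => ht hc.2), Set.indicator_of_notMem ht]
    rw [e1, integral_indicator measurableSet_Ioo, Set.indicator_of_mem hy]
  · have e1 : (fun t : ℝ => ((Tset f).indicator (fun p => h ((phi d).symm p))) (y, t)) =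
        fun _ => 0 := by
      funext t
      exact Set.indicator_of_notMem (fun hc => hy hc.1) _
    rw [e1, integral_zero, Set.indicator_of_notMem hy]

lemma setIntegral_Qf {f : Eu d → ℝ} (hfc : Continuous f) {h : Eu (d+1) → ℝ}
    (hi : IntegrableOn h (Qf f)) :
    ∫ x in Qf f, h x = ∫ y in cube d, ∫ t in Ioo 0 (f y), h (iota y t) := by
  have hT : MeasurableSet (Tset f) := (isOpen_Tset hfc).measurableSet
  have h1 : ∫ x in Qf f, h x = ∫ p in Tset f, h ((phi d).symm p) := by
    have := (measurePreserving_phi (d := d)).setIntegral_preimage_emb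
      (phi d).measurableEmbedding (fun p => h ((phi d).symm p)) (Tset f)
    rw [Qf_eq_preimage]
    rw [← this]
    congr 1
    funext x; simp
  rw [h1]
  have hHT : IntegrableOn (fun p => h ((phi d).symm p)) (Tset f) := integrableOn_Tset hi hT
  have hind : Integrable ((Tset f).indicator (fun p => h ((phi d).symm p)))
      (volume : Measure ((Eu d) × ℝ)) := (integrable_indicator_iff hT).2 hHT
  rw [← integral_indicator hT]
  rw [Measure.volume_eq_prod] at hind ⊢
  rw [MeasureTheory.integral_prod _ hind]
  have h2 : (fun y => ∫ t : ℝ, ((Tset f).indicator (fun p => h ((phi d).symm p))) (y, t)) =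
      (cube d).indicator (fun y => ∫ t in Ioo 0 (f y), h (iota y t)) := by
    funext y; exact inner_indicator_eq h y
  rw [h2, integral_indicator (measurableSet_cube d)]

lemma integrableOn_fiber_integral {f : Eu d → ℝ} (hfc : Continuous f) {h : Eu (d+1) → ℝ}
    (hi : IntegrableOn h (Qf f)) :
    IntegrableOn (fun y => ∫ t in Ioo 0 (f y), h (iota y t)) (cube d) := by
  have hT : MeasurableSet (Tset f) := (isOpen_Tset hfc).measurableSet
  have hHT : IntegrableOn (fun p => h ((phi d).symm p)) (Tset f) := integrableOn_Tset hi hT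
  have hind : Integrable ((Tset f).indicator (fun p => h ((phi d).symm p)))
      (volume : Measure ((Eu d) × ℝ)) := (integrable_indicator_iff hT).2 hHT
  rw [Measure.volume_eq_prod] at hind
  have := hind.integral_prod_left
  have h2 : (fun y => ∫ t : ℝ, ((Tset f).indicator (fun p => h ((phi d).symm p))) (y, t)) =
      (cube d).indicator (fun y => ∫ t in Ioo 0 (f y), h (iota y t)) := by
    funext y; exact inner_indicator_eq h y
  rw [h2] at this
  exact (integrable_indicator_iff (measurableSet_cube d)).1 this

/-! ### linear embedding and derivatives along fibers -/

def eL (d : ℕ) : Eu (d+1) := EuclideanSpace.single (Fin.last d) (1:ℝ)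

lemma norm_eL : ‖eL d‖ = 1 := by simp [eL, EuclideanSpace.norm_single]

def iotaL (d : ℕ) : (Eu d) →L[ℝ] (Eu (d+1)) :=
  { toFun := fun y => iota y 0
    map_add' := by
      intro y z
      ext i
      induction i using Fin.lastCases with
      | last => simp [iota]
      | cast i =>
          show iota (y+z) 0 i.castSucc = iota y 0 i.castSucc + iota z 0 i.castSucc
          simp [iota]
    map_smul' := by
      intro m y
      ext i
      induction i using Fin.lastCases with
      | last => simp [iota]
      | cast i =>
          show iota (m • y) 0 i.castSucc = (m • iota y 0) i.castSucc
          simp [iota]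
    cont := continuous_iota.comp (Continuous.prodMk continuous_id continuous_const) }

lemma iotaL_apply (y : Eu d) : iotaL d y = iota y 0 := rfl

lemma norm_iotaL_apply (y : Eu d) : ‖iotaL d y‖ = ‖y‖ := by
  rw [iotaL_apply, EuclideanSpace.norm_eq, EuclideanSpace.norm_eq, Fin.sum_univ_castSucc]
  simp

lemma opNorm_comp_iotaL_le (A : (Eu (d+1)) →L[ℝ] ℝ) : ‖A.comp (iotaL d)‖ ≤ ‖A‖ := by
  have h1 : ‖iotaL d‖ ≤ 1 := by
    apply ContinuousLinearMap.opNorm_le_bound _ zero_le_one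
    intro y; rw [norm_iotaL_apply, one_mul]
  calc ‖A.comp (iotaL d)‖ ≤ ‖A‖ * ‖iotaL d‖ := ContinuousLinearMap.opNorm_comp_le A _
    _ ≤ ‖A‖ * 1 := by
        apply mul_le_mul_of_nonneg_left h1 (norm_nonneg _)
    _ = ‖A‖ := mul_one _

lemma iota_eq_lin (y : Eu d) (t : ℝ) : iota y t = iotaL d y + t • eL d := by
  ext i
  induction i using Fin.lastCases with
  | last =>
      show iota y t (Fin.last d) = iota y 0 (Fin.last d) + (t • eL d) (Fin.last d)
      simp [eL, EuclideanSpace.single_apply]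
  | cast i =>
      show iota y t i.castSucc = iota y 0 i.castSucc + (t • eL d) i.castSucc
      have hne : i.castSucc ≠ Fin.last d := Fin.ne_of_lt (Fin.castSucc_lt_last i)
      simp [eL, EuclideanSpace.single_apply, hne]

lemma hasFDerivAt_iota_section (t : ℝ) (y : Eu d) :
    HasFDerivAt (fun z : Eu d => iota z t) (iotaL d) y := by
  have he : (fun z : Eu d => iota z t) = fun z => iotaL d z + t • eL d :=
    funext fun z => iota_eq_lin z t
  rw [he]
  exact (iotaL d).hasFDerivAt.add_const _

lemma hasDerivAt_iota_fiber (y : Eu d) (t : ℝ) :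
    HasDerivAt (fun s : ℝ => iota y s) (eL d) t := by
  have he : (fun s : ℝ => iota y s) = fun s => iota y 0 + s • eL d := by
    funext s
    rw [iota_eq_lin y s, iota_eq_lin y 0]
    simp [add_assoc]
  rw [he]
  simpa using ((hasDerivAt_id t).smul_const (eL d)).const_add (iota y 0)

lemma isCompact_closure_cube (d : ℕ) : IsCompact (closure (cube d)) := by
  apply Metric.isCompact_of_isClosed_isBounded isClosed_closure
  rw [Metric.isBounded_iff_subset_closedBall 0]
  refine ⟨Real.sqrt d, ?_⟩
  apply closure_minimal ?_ Metric.isClosed_closedBall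
  intro y hy
  simp only [Metric.mem_closedBall, dist_eq_norm, sub_zero]
  rw [EuclideanSpace.norm_eq]
  apply Real.sqrt_le_sqrt
  calc ∑ i, ‖y i‖ ^ 2 ≤ ∑ _i : Fin d, 1 := by
        apply Finset.sum_le_sum
        intro i _
        have h := hy i
        rw [Real.norm_eq_abs, abs_of_pos h.1]
        nlinarith [h.1, h.2]
    _ = (d : ℝ) := by simp

/-! ### the induction -/

def Kc (M : ℝ) : ℕ → ℝ
  | 0 => 0
  | (n+1) => 2*M^2 + 2*M*(Kc M n)

lemma Kc_nonneg {M : ℝ} (hM : 0 ≤ M) : ∀ n, 0 ≤ Kc M n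
  | 0 => le_refl 0
  | (n+1) => by
      have := Kc_nonneg hM n
      simp only [Kc]
      nlinarith

/-- Poincaré inequality on the unit cube, with derivative data. -/
def CubeP (M : ℝ) (d : ℕ) : Prop :=
  ∀ (v : Eu d → ℝ) (D : Eu d → (Eu d) →L[ℝ] ℝ) (V : Set (Eu d)), IsOpen V →
    closure (cube d) ⊆ V → (∀ y ∈ V, HasFDerivAt v (D y) y) → ContinuousOn D V →
    ∫ y in cube d, (v y - ∫ z in cube d, v z)^2 ≤ Kc M d * ∫ y in cube d, ‖D y‖^2

/-- Poincaré inequality on subgraph domains. -/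
def QfP (M : ℝ) (d : ℕ) : Prop :=
  ∀ f : Eu d → ℝ, Continuous f → (∀ y, f y ∈ Icc 1 M) →
    ∀ (u : Eu (d+1) → ℝ) (u' : Eu (d+1) → (Eu (d+1)) →L[ℝ] ℝ) (U : Set (Eu (d+1))),
      IsOpen U → closure (Qf f) ⊆ U → (∀ x ∈ U, HasFDerivAt u (u' x) x) →
      ContinuousOn u' U → (∫ x in Qf f, u x) = 0 →
      ∫ x in Qf f, (u x)^2 ≤ Kc M (d+1) * ∫ x in Qf f, ‖u' x‖^2

lemma cubeP_zero (M : ℝ) : CubeP M 0 := by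
  intro v D V hV hcl hv hD
  have hvol : volume (cube 0) = 1 := volume_cube 0
  have hconst : ∀ y : Eu 0, v y = v 0 := fun y => congrArg v (Subsingleton.elim y 0)
  have hc : ∫ z in cube 0, v z = v 0 := by
    have : (fun z : Eu 0 => v z) = fun _ => v 0 := funext hconst
    rw [this, setIntegral_const, measureReal_def, hvol]
    simp
  have hzero : ∫ y in cube 0, (v y - ∫ z in cube 0, v z)^2 = 0 := by
    have : (fun y : Eu 0 => (v y - ∫ z in cube 0, v z)^2) = fun _ => 0 := by
      funext y; rw [hc, hconst y]; ring
    rw [this, setIntegral_const]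
    simp
  rw [hzero, show Kc M 0 = 0 from rfl, zero_mul]

lemma cubeP_succ {M : ℝ} (hM : 1 ≤ M) {d : ℕ} (h : QfP M d) : CubeP M (d+1) := by
  intro v D V hV hcl hv hD
  set c := ∫ z in cube (d+1), v z with hc
  have hone : Continuous (fun _ : Eu d => (1:ℝ)) := continuous_const
  have honeI : ∀ y : Eu d, (1:ℝ) ∈ Icc (1:ℝ) M := fun _ => ⟨le_refl 1, hM⟩
  have hQc : Qf (fun _ : Eu d => (1:ℝ)) = cube (d+1) := (cube_succ_eq d).symm
  have hclQ : closure (Qf (fun _ : Eu d => (1:ℝ))) ⊆ V := by rw [hQc]; exact hcl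
  have hvcont : ContinuousOn v V := fun y hy => (hv y hy).continuousAt.continuousWithinAt
  have hvint : IntegrableOn v (cube (d+1)) := by
    have h1 : ContinuousOn v (closure (cube (d+1))) := hvcont.mono hcl
    exact (h1.integrableOn_compact (isCompact_closure_cube (d+1))).mono_set subset_closure
  have hmean : ∫ x in Qf (fun _ : Eu d => (1:ℝ)), (v x - c) = 0 := by
    rw [hQc, integral_sub hvint (integrableOn_const ?_)]
    · rw [setIntegral_const, measureReal_def, volume_cube]
      simp [hc]
    · rw [volume_cube]; exact ENNReal.one_ne_top
  have := h (fun _ => (1:ℝ)) hone honeI (fun x => v x - c) D V hV hclQ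
    (fun x hx => (hv x hx).sub_const c) hD hmean
  rw [hQc] at this
  exact this

set_option maxHeartbeats 2000000 in
lemma qfP_step {M : ℝ} (hM : 1 ≤ M) {d : ℕ} (hC : CubeP M d) : QfP M d := by
  intro f hfc hfI u u' U hU hclU hu hu' hmean
  have hf1 : ∀ y, 1 ≤ f y := fun y => (hfI y).1
  have hfM : ∀ y, f y ≤ M := fun y => (hfI y).2
  have hf0 : ∀ y, 0 < f y := fun y => lt_of_lt_of_le one_pos (hf1 y)
  have hM0 : (0:ℝ) ≤ M := le_trans zero_le_one hM
  have hcptΩ : IsCompact (closure (Qf f)) := isCompact_closure_Qf hM hfM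
  have hvolΩ : volume (Qf f) ≠ ⊤ := ne_of_lt (volume_Qf_lt_top hM hfM)
  have huc : ContinuousOn u U := fun x hx => (hu x hx).continuousAt.continuousWithinAt
  have hucl : ContinuousOn u (closure (Qf f)) := huc.mono hclU
  have hu'cl : ContinuousOn u' (closure (Qf f)) := hu'.mono hclU
  have hmsΩ : MeasurableSet (Qf f) := (isOpen_Qf hfc).measurableSet
  have hu_int : IntegrableOn u (Qf f) := integrableOn_Qf_of_continuousOn hM hfM hucl
  have husq_int : IntegrableOn (fun x => u x^2) (Qf f) :=
    integrableOn_Qf_of_continuousOn hM hfM (hucl.pow 2)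
  have hgr_int : IntegrableOn (fun x => ‖u' x‖^2) (Qf f) :=
    integrableOn_Qf_of_continuousOn hM hfM (hu'cl.norm.pow 2)
  set G := ∫ x in Qf f, ‖u' x‖^2 with hG
  have hG0 : 0 ≤ G := setIntegral_nonneg hmsΩ fun x _ => sq_nonneg _
  -- neighborhood of the slab
  have hK1cpt : IsCompact (closure (cube (d+1))) := isCompact_closure_cube (d+1)
  have hK1U : closure (cube (d+1)) ⊆ U :=
    subset_trans (closure_mono (cube_subset_Qf hf1)) hclU
  obtain ⟨ε, hε, hthick⟩ := hK1cpt.exists_thickening_subset_open hU hK1U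
  set K₂ := Metric.cthickening (ε/2) (closure (cube (d+1))) with hK₂def
  have hK₂cpt : IsCompact K₂ := hK1cpt.cthickening
  have hK₂U : K₂ ⊆ U :=
    subset_trans (Metric.cthickening_subset_thickening' hε (by linarith) _) hthick
  set V := Metric.thickening (ε/2) (closure (cube d)) with hVdef
  have hVopen : IsOpen V := Metric.isOpen_thickening
  have hVsub : closure (cube d) ⊆ V := Metric.self_subset_thickening (by linarith) _
  have hιK₂ : ∀ y ∈ V, ∀ t ∈ Icc (0:ℝ) 1, iota y t ∈ K₂ := by
    intro y hy t ht
    obtain ⟨y₀, hy₀, hdist⟩ := Metric.mem_thickening_iff.1 hy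
    apply Metric.thickening_subset_cthickening _ _
    rw [Metric.mem_thickening_iff]
    exact ⟨iota y₀ t, iota_mem_closure_cube_succ hy₀ ht, by rwa [dist_iota]⟩
  have hιU : ∀ y ∈ V, ∀ t ∈ Icc (0:ℝ) 1, iota y t ∈ U := fun y hy t ht => hK₂U (hιK₂ y hy t ht)
  obtain ⟨B, hB⟩ := hK₂cpt.exists_bound_of_continuousOn (hu'.mono hK₂U)
  set B' := max B 0 with hB'def
  have hB'0 : (0:ℝ) ≤ B' := le_max_right _ _
  have hBle : ∀ x ∈ K₂, ‖u' x‖ ≤ B' := fun x hx => le_trans (hB x hx) (le_max_left _ _)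
  -- the averaged function v and its derivative D
  set v := fun y : Eu d => ∫ t in Ioo (0:ℝ) 1, u (iota y t) with hvdef
  set D := fun y : Eu d => ∫ t in Ioo (0:ℝ) 1, (u' (iota y t)).comp (iotaL d) with hDdef
  haveI hfin01 : IsFiniteMeasure (volume.restrict (Ioo (0:ℝ) 1)) := by
    constructor
    rw [Measure.restrict_apply_univ, Real.volume_Ioo]
    exact ENNReal.ofReal_lt_top
  have hclc : Continuous (fun A : (Eu (d+1)) →L[ℝ] ℝ => A.comp (iotaL d)) :=
    ((ContinuousLinearMap.compL ℝ (Eu d) (Eu (d+1)) ℝ).flip (iotaL d)).continuous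
  have hcontFt : ∀ y ∈ V, ContinuousOn (fun t => u (iota y t)) (Icc (0:ℝ) 1) := by
    intro y hy
    exact huc.comp ((continuous_iota.comp (Continuous.prodMk_right y)).continuousOn)
      (fun s hs => hιU y hy s hs)
  have hcontF't : ∀ y ∈ V, ContinuousOn (fun t => (u' (iota y t)).comp (iotaL d)) (Icc (0:ℝ) 1) := by
    intro y hy
    have h1 : ContinuousOn (fun t => u' (iota y t)) (Icc (0:ℝ) 1) :=
      hu'.comp ((continuous_iota.comp (Continuous.prodMk_right y)).continuousOn)
        (fun s hs => hιU y hy s hs)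
    exact hclc.comp_continuousOn h1
  have hvD : ∀ y ∈ V, HasFDerivAt v (D y) y := by
    intro y₀ hy₀
    obtain ⟨r, hr, hball⟩ := Metric.isOpen_iff.1 hVopen y₀ hy₀
    have key := hasFDerivAt_integral_of_dominated_of_fderiv_le
      (μ := volume.restrict (Ioo (0:ℝ) 1))
      (F := fun y t => u (iota y t)) (F' := fun y t => (u' (iota y t)).comp (iotaL d))
      (x₀ := y₀) (bound := fun _ => B') (Metric.ball_mem_nhds y₀ hr)
      (Filter.eventually_of_mem (hVopen.mem_nhds hy₀)
        (fun y hy => ((hcontFt y hy).mono Ioo_subset_Icc_self).aestronglyMeasurable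
          measurableSet_Ioo))
      (((hcontFt y₀ hy₀).integrableOn_compact isCompact_Icc).mono_set Ioo_subset_Icc_self)
      (((hcontF't y₀ hy₀).mono Ioo_subset_Icc_self).aestronglyMeasurable measurableSet_Ioo)
      ?_ (integrable_const B') ?_
    · exact key
    · refine Filter.Eventually.mono (ae_restrict_mem measurableSet_Ioo) ?_
      intro t ht y hy
      exact le_trans (opNorm_comp_iotaL_le _)
        (hBle _ (hιK₂ y (hball hy) t (Ioo_subset_Icc_self ht)))
    · refine Filter.Eventually.mono (ae_restrict_mem measurableSet_Ioo) ?_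
      intro t ht y hy
      exact (hu _ (hιU y (hball hy) t (Ioo_subset_Icc_self ht))).comp y
        (hasFDerivAt_iota_section t y)
  have hDc : ContinuousOn D V := by
    apply continuousOn_of_dominated (bound := fun _ => B')
    · exact fun y hy => ((hcontF't y hy).mono Ioo_subset_Icc_self).aestronglyMeasurable
        measurableSet_Ioo
    · intro y hy
      refine Filter.Eventually.mono (ae_restrict_mem measurableSet_Ioo) ?_
      intro t ht
      exact le_trans (opNorm_comp_iotaL_le _) (hBle _ (hιK₂ y hy t (Ioo_subset_Icc_self ht)))
    · exact integrable_const B'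
    · refine Filter.Eventually.mono (ae_restrict_mem measurableSet_Ioo) ?_
      intro t ht
      have h1 : ContinuousOn (fun y => u' (iota y t)) V := by
        apply hu'.comp
        · exact (continuous_iota.comp (Continuous.prodMk continuous_id continuous_const)).continuousOn
        · exact fun y hy => hιU y hy t (Ioo_subset_Icc_self ht)
      exact hclc.comp_continuousOn h1
  have hvc : ContinuousOn v V := fun y hy => (hvD y hy).continuousAt.continuousWithinAt
  set c := ∫ z in cube d, v z with hcdef
  -- fiber estimate
  have hfib : ∀ y ∈ cube d, ∫ t in Ioo 0 (f y), (u (iota y t) - v y)^2 ≤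
      M^2 * ∫ t in Ioo 0 (f y), ‖u' (iota y t)‖^2 := by
    intro y hy
    have hOopen : IsOpen ((fun t : ℝ => iota y t) ⁻¹' U) :=
      hU.preimage (continuous_iota.comp (Continuous.prodMk_right y))
    have hIccO : Icc 0 (f y) ⊆ (fun t : ℝ => iota y t) ⁻¹' U := fun t ht =>
      hclU (iota_mem_closure_Qf hy (hf0 y) ht)
    have hg : ∀ t ∈ (fun t : ℝ => iota y t) ⁻¹' U,
        HasDerivAt (fun s => u (iota y s)) (u' (iota y t) (eL d)) t := by
      intro t ht
      exact (hu _ ht).comp_hasDerivAt t (hasDerivAt_iota_fiber y t)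
    have hg' : ContinuousOn (fun t => u' (iota y t) (eL d)) ((fun t : ℝ => iota y t) ⁻¹' U) := by
      have h1 : ContinuousOn (fun t => u' (iota y t)) ((fun t : ℝ => iota y t) ⁻¹' U) :=
        hu'.comp ((continuous_iota.comp (Continuous.prodMk_right y)).continuousOn) (fun t ht => ht)
      exact (ContinuousLinearMap.apply ℝ ℝ (eL d)).continuous.comp_continuousOn h1
    have hcore := core1d (hf1 y) hOopen hIccO hg hg'
    have hsq : ∀ t ∈ Ioo 0 (f y), (u' (iota y t) (eL d))^2 ≤ ‖u' (iota y t)‖^2 := by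
      intro t ht
      have h1 : |u' (iota y t) (eL d)| ≤ ‖u' (iota y t)‖ := by
        have h2 := (u' (iota y t)).le_opNorm (eL d)
        rwa [norm_eL, mul_one, Real.norm_eq_abs] at h2
      nlinarith [abs_nonneg (u' (iota y t) (eL d)), norm_nonneg (u' (iota y t)),
        sq_abs (u' (iota y t) (eL d))]
    have hcont_g' : ContinuousOn (fun t => u' (iota y t) (eL d)) (Icc 0 (f y)) :=
      hg'.mono hIccO
    have hcont_n : ContinuousOn (fun t => ‖u' (iota y t)‖) (Icc 0 (f y)) :=
      (hu'.comp ((continuous_iota.comp (Continuous.prodMk_right y)).continuousOn)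
        (fun t ht => hIccO ht)).norm
    have hint1 : IntegrableOn (fun t => (u' (iota y t) (eL d))^2) (Ioo 0 (f y)) :=
      ((hcont_g'.pow 2).integrableOn_compact isCompact_Icc).mono_set Ioo_subset_Icc_self
    have hint2 : IntegrableOn (fun t => ‖u' (iota y t)‖^2) (Ioo 0 (f y)) :=
      ((hcont_n.pow 2).integrableOn_compact isCompact_Icc).mono_set Ioo_subset_Icc_self
    have hmono := setIntegral_mono_on hint1 hint2 measurableSet_Ioo hsq
    have hnn1 : 0 ≤ ∫ t in Ioo 0 (f y), (u' (iota y t) (eL d))^2 :=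
      setIntegral_nonneg measurableSet_Ioo fun t _ => sq_nonneg _
    have hfy2 : (f y)^2 ≤ M^2 := by nlinarith [hf1 y, hfM y]
    have hveq : v y = ∫ s in Ioo (0:ℝ) 1, u (iota y s) := by rw [hvdef]
    calc ∫ t in Ioo 0 (f y), (u (iota y t) - v y)^2
        = ∫ t in Ioo 0 (f y), ((fun s => u (iota y s)) t - ∫ s in Ioo (0:ℝ) 1, u (iota y s))^2 := by
          rw [← hveq]
      _ ≤ (f y)^2 * ∫ t in Ioo 0 (f y), (u' (iota y t) (eL d))^2 := hcore
      _ ≤ M^2 * ∫ t in Ioo 0 (f y), ‖u' (iota y t)‖^2 := by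
          apply mul_le_mul hfy2 hmono hnn1 (by positivity)
  -- Fubini pieces
  set Iy := fun y : Eu d => ∫ t in Ioo 0 (f y), ‖u' (iota y t)‖^2 with hIydef
  have hIy_int : IntegrableOn Iy (cube d) := integrableOn_fiber_integral hfc hgr_int
  have hIy_eq : ∫ y in cube d, Iy y = G := (setIntegral_Qf hfc hgr_int).symm
  -- mean-zero trick
  have hAc_int : IntegrableOn (fun x => (u x - c)^2) (Qf f) :=
    integrableOn_Qf_of_continuousOn hM hfM ((hucl.sub continuousOn_const).pow 2)
  have h1 : ∫ x in Qf f, u x^2 ≤ ∫ x in Qf f, (u x - c)^2 := by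
    have he : (fun x => (u x - c)^2) = fun x => (u x^2 - (2*c)*u x) + c^2 := by
      funext x; ring
    have h2cu_int : IntegrableOn (fun x => (2*c)*u x) (Qf f) := hu_int.const_mul (2*c)
    have hsub_int : IntegrableOn (fun x => u x^2 - (2*c)*u x) (Qf f) := husq_int.sub h2cu_int
    have hconst_int : IntegrableOn (fun _ : Eu (d+1) => c^2) (Qf f) :=
      integrableOn_const hvolΩ
    rw [he, integral_add hsub_int hconst_int, integral_sub husq_int h2cu_int,
      integral_const_mul, hmean, setIntegral_const, measureReal_def, smul_eq_mul]
    nlinarith [sq_nonneg c, ENNReal.toReal_nonneg (a := volume (Qf f))]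
  -- splitting
  have hvproj_cont : ContinuousOn (fun x => v (proj x)) (closure (Qf f)) := by
    apply hvc.comp continuous_proj.continuousOn
    exact fun x hx => hVsub (proj_mem_closure_cube hx)
  have hA_int : IntegrableOn (fun x => (u x - v (proj x))^2) (Qf f) :=
    integrableOn_Qf_of_continuousOn hM hfM ((hucl.sub hvproj_cont).pow 2)
  have hB_int : IntegrableOn (fun x => (v (proj x) - c)^2) (Qf f) :=
    integrableOn_Qf_of_continuousOn hM hfM ((hvproj_cont.sub continuousOn_const).pow 2)
  have h2 : ∫ x in Qf f, (u x - c)^2 ≤ 2*(∫ x in Qf f, (u x - v (proj x))^2)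
      + 2*(∫ x in Qf f, (v (proj x) - c)^2) := by
    have hptwise : ∀ x ∈ Qf f, (u x - c)^2 ≤ 2*(u x - v (proj x))^2 + 2*(v (proj x) - c)^2 := by
      intro x _
      nlinarith [sq_nonneg ((u x - v (proj x)) - (v (proj x) - c))]
    have hA2_int : IntegrableOn (fun x => 2*(u x - v (proj x))^2) (Qf f) :=
      hA_int.const_mul 2
    have hB2_int : IntegrableOn (fun x => 2*(v (proj x) - c)^2) (Qf f) :=
      hB_int.const_mul 2
    have hsum_int : IntegrableOn
        (fun x => 2*(u x - v (proj x))^2 + 2*(v (proj x) - c)^2) (Qf f) :=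
      hA2_int.add hB2_int
    calc ∫ x in Qf f, (u x - c)^2
        ≤ ∫ x in Qf f, (2*(u x - v (proj x))^2 + 2*(v (proj x) - c)^2) :=
          setIntegral_mono_on hAc_int hsum_int hmsΩ hptwise
      _ = 2*(∫ x in Qf f, (u x - v (proj x))^2) + 2*(∫ x in Qf f, (v (proj x) - c)^2) := by
          rw [integral_add hA2_int hB2_int, integral_const_mul, integral_const_mul]
  -- A-term
  have hA_fub : ∫ x in Qf f, (u x - v (proj x))^2
      = ∫ y in cube d, ∫ t in Ioo 0 (f y), (u (iota y t) - v y)^2 := by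
    simpa only [proj_iota] using setIntegral_Qf hfc hA_int
  have hA_fn_int : IntegrableOn
      (fun y => ∫ t in Ioo 0 (f y), (u (iota y t) - v y)^2) (cube d) := by
    simpa only [proj_iota] using integrableOn_fiber_integral hfc hA_int
  have hA_final : ∫ x in Qf f, (u x - v (proj x))^2 ≤ M^2 * G := by
    rw [hA_fub]
    calc ∫ y in cube d, ∫ t in Ioo 0 (f y), (u (iota y t) - v y)^2
        ≤ ∫ y in cube d, M^2 * Iy y :=
          setIntegral_mono_on hA_fn_int (hIy_int.const_mul (M^2)) (measurableSet_cube d)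
            (fun y hy => hfib y hy)
      _ = M^2 * ∫ y in cube d, Iy y := integral_const_mul _ _
      _ = M^2 * G := by rw [hIy_eq]
  -- B-term
  have hB_fub : ∫ x in Qf f, (v (proj x) - c)^2 = ∫ y in cube d, (f y) * (v y - c)^2 := by
    have h0 := setIntegral_Qf hfc hB_int
    simp only [proj_iota] at h0
    rw [h0]
    apply setIntegral_congr_fun (measurableSet_cube d)
    intro y hy
    show ∫ _t in Ioo 0 (f y), (v y - c)^2 = f y * (v y - c)^2
    rw [setIntegral_const, measureReal_def, Real.volume_Ioo, sub_zero,
      ENNReal.toReal_ofReal (le_of_lt (hf0 y)), smul_eq_mul]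
  have hvc_cube : ContinuousOn v (closure (cube d)) := hvc.mono hVsub
  have hvsq_int : IntegrableOn (fun y => (v y - c)^2) (cube d) :=
    (((hvc_cube.sub continuousOn_const).pow 2).integrableOn_compact
      (isCompact_closure_cube d)).mono_set subset_closure
  have hfv_int : IntegrableOn (fun y => f y * (v y - c)^2) (cube d) :=
    ((hfc.continuousOn.mul ((hvc_cube.sub continuousOn_const).pow 2)).integrableOn_compact
      (isCompact_closure_cube d)).mono_set subset_closure
  have hB_le1 : ∫ y in cube d, (f y) * (v y - c)^2 ≤ M * ∫ y in cube d, (v y - c)^2 := by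
    calc ∫ y in cube d, (f y) * (v y - c)^2 ≤ ∫ y in cube d, M * (v y - c)^2 :=
          setIntegral_mono_on hfv_int (hvsq_int.const_mul M) (measurableSet_cube d)
            (fun y hy => mul_le_mul_of_nonneg_right (hfM y) (sq_nonneg _))
      _ = M * ∫ y in cube d, (v y - c)^2 := integral_const_mul _ _
  have hcube := hC v D V hVopen hVsub hvD hDc
  rw [← hcdef] at hcube
  -- D bound
  have hDnorm_int : IntegrableOn (fun y => ‖D y‖^2) (cube d) :=
    (((hDc.mono hVsub).norm.pow 2).integrableOn_compact
      (isCompact_closure_cube d)).mono_set subset_closure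
  have hD_le : ∫ y in cube d, ‖D y‖^2 ≤ G := by
    have hpt : ∀ y ∈ cube d, ‖D y‖^2 ≤ Iy y := by
      intro y hy
      have hyV : y ∈ V := hVsub (subset_closure hy)
      have hIccO : ∀ t ∈ Icc 0 (f y), iota y t ∈ U := fun t ht =>
        hclU (iota_mem_closure_Qf hy (hf0 y) ht)
      have hcont_n : ContinuousOn (fun t => ‖u' (iota y t)‖) (Icc 0 (f y)) :=
        (hu'.comp ((continuous_iota.comp (Continuous.prodMk_right y)).continuousOn)
          (fun t ht => hIccO t ht)).norm
      have hIcc01 : Icc (0:ℝ) 1 ⊆ Icc 0 (f y) := Icc_subset_Icc le_rfl (hf1 y)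
      have hint_n1 : IntegrableOn (fun t => ‖(u' (iota y t)).comp (iotaL d)‖) (Ioo (0:ℝ) 1) :=
        (((hcontF't y hyV).norm).integrableOn_compact isCompact_Icc).mono_set
          Ioo_subset_Icc_self
      have hint_n : IntegrableOn (fun t => ‖u' (iota y t)‖) (Ioo (0:ℝ) 1) :=
        (((hcont_n.mono hIcc01)).integrableOn_compact isCompact_Icc).mono_set
          Ioo_subset_Icc_self
      have hint_sq : IntegrableOn (fun t => ‖u' (iota y t)‖^2) (Ioo (0:ℝ) 1) :=
        ((((hcont_n.mono hIcc01)).pow 2).integrableOn_compact isCompact_Icc).mono_set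
          Ioo_subset_Icc_self
      have hint_sq_fy : IntegrableOn (fun t => ‖u' (iota y t)‖^2) (Ioo 0 (f y)) :=
        ((hcont_n.pow 2).integrableOn_compact isCompact_Icc).mono_set Ioo_subset_Icc_self
      have hDle1 : ‖D y‖ ≤ ∫ t in Ioo (0:ℝ) 1, ‖u' (iota y t)‖ := by
        have e1 : ‖D y‖ ≤ ∫ t in Ioo (0:ℝ) 1, ‖(u' (iota y t)).comp (iotaL d)‖ := by
          rw [hDdef]
          exact norm_integral_le_integral_norm _
        refine le_trans e1 (setIntegral_mono_on hint_n1 hint_n measurableSet_Ioo ?_)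
        intro t _
        exact opNorm_comp_iotaL_le _
      have hμ01 : volume (Ioo (0:ℝ) 1) ≠ ⊤ := by simp [Real.volume_Ioo]
      have hcs := sq_setIntegral_le measurableSet_Ioo hμ01 hint_n hint_sq
      have hvol1 : (volume (Ioo (0:ℝ) 1)).toReal = 1 := by simp [Real.volume_Ioo]
      have hmono_set : ∫ t in Ioo (0:ℝ) 1, ‖u' (iota y t)‖^2 ≤ Iy y := by
        rw [hIydef]
        exact setIntegral_mono_set hint_sq_fy
          (Filter.Eventually.of_forall fun t => sq_nonneg _)
          ((Ioo_subset_Ioo le_rfl (hf1 y)).eventuallyLE)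
      calc ‖D y‖^2 ≤ (∫ t in Ioo (0:ℝ) 1, ‖u' (iota y t)‖)^2 := by
            apply pow_le_pow_left₀ (norm_nonneg _) hDle1
        _ ≤ (volume (Ioo (0:ℝ) 1)).toReal * ∫ t in Ioo (0:ℝ) 1, ‖u' (iota y t)‖^2 := hcs
        _ = ∫ t in Ioo (0:ℝ) 1, ‖u' (iota y t)‖^2 := by rw [hvol1, one_mul]
        _ ≤ Iy y := hmono_set
    exact le_trans (setIntegral_mono_on hDnorm_int hIy_int (measurableSet_cube d) hpt)
      (le_of_eq hIy_eq)
  -- final assembly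
  have hB_final : ∫ x in Qf f, (v (proj x) - c)^2 ≤ M * (Kc M d * G) := by
    rw [hB_fub]
    refine le_trans hB_le1 (mul_le_mul_of_nonneg_left ?_ hM0)
    refine le_trans hcube ?_
    exact mul_le_mul_of_nonneg_left hD_le (Kc_nonneg hM0 d)
  calc ∫ x in Qf f, u x^2 ≤ ∫ x in Qf f, (u x - c)^2 := h1
    _ ≤ 2*(∫ x in Qf f, (u x - v (proj x))^2) + 2*(∫ x in Qf f, (v (proj x) - c)^2) := h2
    _ ≤ 2*(M^2 * G) + 2*(M * (Kc M d * G)) := by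
        have := hA_final
        have := hB_final
        nlinarith [hA_final, hB_final]
    _ = Kc M (d+1) * G := by
        rw [show Kc M (d+1) = 2*M^2 + 2*M*(Kc M d) from rfl]
        ring

lemma cubeP_all {M : ℝ} (hM : 1 ≤ M) : ∀ d, CubeP M d
  | 0 => cubeP_zero M
  | (d+1) => cubeP_succ hM (qfP_step hM (cubeP_all hM d))

lemma qfP_all {M : ℝ} (hM : 1 ≤ M) (d : ℕ) : QfP M d := qfP_step hM (cubeP_all hM d)

lemma norm_gradient_eq {n : ℕ} (u : Eu n → ℝ) (x : Eu n) :
    ‖gradient u x‖ = ‖fderiv ℝ u x‖ := by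
  rw [gradient, LinearIsometryEquiv.norm_map]

end PoincareAux

theorem stmt_11 (d : ℕ) (hd : 1 ≤ d) (L M : ℝ) (hL : 0 < L) (hM : 1 < M) :
    ∃ C > (0 : ℝ), ∀ f : EuclideanSpace ℝ (Fin d) → ℝ,
      (∀ y ∈ cube d, f y ∈ Icc 1 M) →
      LipschitzOnWith L.toNNReal f (cube d) →
      ∀ (u : EuclideanSpace ℝ (Fin (d + 1)) → ℝ) (U : Set (EuclideanSpace ℝ (Fin (d + 1)))),
        IsOpen U → closure (Qf f) ⊆ U → ContDiffOn ℝ 1 u U →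
        (∫ x in Qf f, u x) = 0 →
        ∫ x in Qf f, (u x) ^ 2 ≤ C ^ 2 * ∫ x in Qf f, ‖gradient u x‖ ^ 2 := by
  have hM1 : (1:ℝ) ≤ M := le_of_lt hM
  have hM0 : (0:ℝ) ≤ M := le_trans zero_le_one hM1
  have hKnn : 0 ≤ PoincareAux.Kc M (d+1) := PoincareAux.Kc_nonneg hM0 (d+1)
  have hKpos : 0 < PoincareAux.Kc M (d+1) := by
    have h1 := PoincareAux.Kc_nonneg hM0 d
    show (0:ℝ) < 2*M^2 + 2*M*(PoincareAux.Kc M d)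
    nlinarith
  refine ⟨Real.sqrt (PoincareAux.Kc M (d+1)), Real.sqrt_pos.2 hKpos, ?_⟩
  intro f hf hlip u U hU hclU hctd hmean
  obtain ⟨F, hF, hEq⟩ := hlip.extend_real
  have hF'c : Continuous (fun y => max 1 (min (F y) M)) :=
    continuous_const.max ((hF.continuous).min continuous_const)
  have hF'I : ∀ y, max 1 (min (F y) M) ∈ Icc (1:ℝ) M := fun y =>
    ⟨le_max_left _ _, max_le hM1 (min_le_right _ _)⟩
  have hEq' : ∀ y ∈ cube d, max 1 (min (F y) M) = f y := by
    intro y hy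
    have h1 : F y = f y := (hEq hy).symm
    rw [h1, min_eq_left (hf y hy).2, max_eq_right (hf y hy).1]
  have hQeq : Qf f = Qf (fun y => max 1 (min (F y) M)) := by
    ext x
    constructor
    · rintro ⟨h1, h2⟩
      refine ⟨h1, ?_⟩
      show x (Fin.last d) ∈ Ioo 0 (max 1 (min (F (proj x)) M))
      rwa [hEq' _ h1]
    · rintro ⟨h1, h2⟩
      refine ⟨h1, ?_⟩
      have h2' : x (Fin.last d) ∈ Ioo 0 (max 1 (min (F (proj x)) M)) := h2
      rwa [hEq' _ h1] at h2'
  have hu : ∀ x ∈ U, HasFDerivAt u (fderiv ℝ u x) x := by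
    intro x hx
    exact ((hctd.differentiableOn one_ne_zero).differentiableAt (hU.mem_nhds hx)).hasFDerivAt
  have hu' : ContinuousOn (fun x => fderiv ℝ u x) U :=
    hctd.continuousOn_fderiv_of_isOpen hU le_rfl
  rw [hQeq] at hmean
  have key := PoincareAux.qfP_all hM1 d (fun y => max 1 (min (F y) M)) hF'c hF'I u
    (fun x => fderiv ℝ u x) U hU (by rwa [hQeq] at hclU) hu hu' hmean
  rw [← hQeq] at key
  have hgrad : (fun x : EuclideanSpace ℝ (Fin (d+1)) => ‖gradient u x‖ ^ 2)
      = fun x => ‖fderiv ℝ u x‖ ^ 2 := by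
    funext x
    rw [PoincareAux.norm_gradient_eq]
  rw [hgrad, Real.sq_sqrt hKnn]
  exact key
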